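/- Lemma 5.1 (first forbidden gap): for every β ≥ 0 and every u with 0 ≤ u < (1 + β/4)^{−1}, one has g(u,β) > 0; in particular, the equation g(u,β) = 0 has no roots in the interval [0, (1 + β/4)^{−1}). -/

import Mathlib

open Real

lemma exp_le_quartic {x : ℝ} (h0 : 0 ≤ x) (h1 : x ≤ 1) :
    Real.exp x ≤ 1 + x + x^2/2 + x^3/6 + 5*x^4/96 := by
  have h := Real.exp_bound (x := x) (by rw [abs_of_nonneg h0]; exact h1) (n := 4) (by norm_num)
  rw [abs_of_nonneg h0] at h
  have h' := (abs_sub_le_iff.1 h).1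
  norm_num [Finset.sum_range_succ, Nat.factorial] at h'
  nlinarith [h']

lemma exp_neg_ge_quartic {x : ℝ} (h0 : 0 ≤ x) (h1 : x ≤ 1) :
    1 - x + x^2/2 - x^3/6 - 5*x^4/96 ≤ Real.exp (-x) := by
  have h := Real.exp_bound (x := -x) (by rw [abs_neg, abs_of_nonneg h0]; exact h1) (n := 4) (by norm_num)
  rw [abs_neg, abs_of_nonneg h0] at h
  have h' := (abs_sub_le_iff.1 h).2
  norm_num [Finset.sum_range_succ, Nat.factorial] at h'
  nlinarith [h']

lemma exp_neg_le_quartic {x : ℝ} (h0 : 0 ≤ x) (h1 : x ≤ 1) :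
    Real.exp (-x) ≤ 1 - x + x^2/2 - x^3/6 + 5*x^4/96 := by
  have h := Real.exp_bound (x := -x) (by rw [abs_neg, abs_of_nonneg h0]; exact h1) (n := 4) (by norm_num)
  rw [abs_neg, abs_of_nonneg h0] at h
  have h' := (abs_sub_le_iff.1 h).1
  norm_num [Finset.sum_range_succ, Nat.factorial] at h'
  nlinarith [h']

lemma cosh_le_quartic {x : ℝ} (h0 : 0 ≤ x) (h1 : x ≤ 1) :
    Real.cosh x ≤ 1 + x^2/2 + 5*x^4/96 := by
  rw [Real.cosh_eq]
  nlinarith [exp_le_quartic h0 h1, exp_neg_le_quartic h0 h1]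

lemma sinh_le_quartic {x : ℝ} (h0 : 0 ≤ x) (h1 : x ≤ 1) :
    Real.sinh x ≤ x + x^3/6 + 5*x^4/96 := by
  rw [Real.sinh_eq]
  nlinarith [exp_le_quartic h0 h1, exp_neg_ge_quartic h0 h1]

lemma cosh4_le {s q : ℝ} (h0 : 0 ≤ s) (h1 : s ≤ 1) (hq : 1 + s^2/2 + 5*s^4/96 ≤ q) :
    Real.cosh (4*s) ≤ 2*(2*q^2-1)^2-1 := by
  have hc : Real.cosh s ≤ q := le_trans (cosh_le_quartic h0 h1) hq
  have h1c : 1 ≤ Real.cosh s := Real.one_le_cosh s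
  have e2 : ∀ y : ℝ, Real.cosh (2*y) = 2*(Real.cosh y)^2 - 1 := fun y => by
    rw [Real.cosh_two_mul, Real.sinh_sq]; ring
  have e : Real.cosh (4*s) = 2*(2*(Real.cosh s)^2-1)^2-1 := by
    rw [show (4:ℝ)*s = 2*(2*s) by ring, e2, e2]
  rw [e]
  have hq1 : 1 ≤ q := by nlinarith
  have hsq : (Real.cosh s)^2 ≤ q^2 := by nlinarith
  have h2 : 2*(Real.cosh s)^2 - 1 ≤ 2*q^2-1 := by linarith
  have h3 : (1:ℝ) ≤ 2*(Real.cosh s)^2 - 1 := by nlinarith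
  nlinarith [mul_le_mul h2 h2 (by linarith) (by linarith : (0:ℝ) ≤ 2*q^2-1)]

/-- Cauchy–Schwarz type bound for the oscillatory part. -/
lemma keyCS (u a b : ℝ) :
    -(u^4*(1+u^4)*Real.cosh a) ≤
      u^4 * (1 - u^4) * Real.cosh a * Real.cos b - 2 * u^6 * Real.sinh a * Real.sin b := by
  set C := Real.cosh a with hC
  set S := Real.sinh a with hS
  set c := Real.cos b with hc
  set s := Real.sin b with hs
  have hpy : s^2 + c^2 = 1 := Real.sin_sq_add_cos_sq b
  have hhy : C^2 = S^2 + 1 := Real.cosh_sq a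
  have hC1 : 1 ≤ C := Real.one_le_cosh a
  have hXY : (C*c)^2 + (S*s)^2 ≤ C^2 := by nlinarith [sq_nonneg s, sq_nonneg c]
  have hM : 0 ≤ u^4*(1+u^4)*C := by positivity
  nlinarith [sq_nonneg (2*u^6*(C*c) + u^4*(1-u^4)*(S*s)),
    mul_le_mul_of_nonneg_left hXY (by positivity : (0:ℝ) ≤ u^8*(1+u^4)^2),
    sq_nonneg (u^4 * (1 - u^4) * (C*c) - 2 * u^6 * (S*s) + u^4*(1+u^4)*C), hM,
    sq_nonneg (u^4*(1+u^4)*C)]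

/-- Interval step for the region `u ≤ 4/5`. -/
lemma Acase (l r q K : ℝ) {u : ℝ} (hu0 : 0 ≤ u) (hl : l ≤ u) (hr : u ≤ r) (hl0 : 0 ≤ l)
    (hr1 : r ≤ 1) (hq : 1 + (1-l)^2/2 + 5*(1-l)^4/96 ≤ q) (hK : 2*(2*q^2-1)^2-1 ≤ K)
    (hnum : r^4*(1+r^4)*K < 1 - r^12) :
    u^4*(1+u^4)*Real.cosh (4*(1-u)) < 1 - u^12 := by
  have h1 : Real.cosh (4*(1-u)) ≤ Real.cosh (4*(1-l)) := by
    rw [Real.cosh_le_cosh, abs_of_nonneg (by linarith), abs_of_nonneg (by linarith)]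
    linarith
  have h2 : Real.cosh (4*(1-l)) ≤ K :=
    le_trans (cosh4_le (by linarith) (by linarith) hq) hK
  have hC0 : 0 < Real.cosh (4*(1-u)) := Real.cosh_pos _
  have hK0 : 0 < K := lt_of_lt_of_le hC0 (le_trans h1 h2)
  have p4 : u^4 ≤ r^4 := pow_le_pow_left₀ hu0 hr 4
  have p8 : u^8 ≤ r^8 := pow_le_pow_left₀ hu0 hr 8
  have p12 : u^12 ≤ r^12 := pow_le_pow_left₀ hu0 hr 12
  have hm : u^4*(1+u^4)*Real.cosh (4*(1-u)) ≤ r^4*(1+r^4)*K := by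
    have hur : u^4*(1+u^4) ≤ r^4*(1+r^4) := by nlinarith
    have h0' : 0 ≤ u^4*(1+u^4) := by positivity
    calc u^4*(1+u^4)*Real.cosh (4*(1-u)) ≤ u^4*(1+u^4)*K :=
          mul_le_mul_of_nonneg_left (le_trans h1 h2) h0'
      _ ≤ r^4*(1+r^4)*K := mul_le_mul_of_nonneg_right hur hK0.le
  linarith

/-- The key polynomial estimate in the region `u ≥ 4/5`. -/
lemma Bpoly {u : ℝ} (h0 : 4/5 ≤ u) (h1 : u < 1) :
    (544/15)*u^4*(1-u)^2 < 1 - u^12 := by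
  have hu0 : (0:ℝ) ≤ u := by linarith
  have hA : u^4*(1-u) ≤ 256/3125 := by
    nlinarith [mul_nonneg (sq_nonneg (u-4/5))
      (by positivity : (0:ℝ) ≤ u^3 + 3*u^2/5 + 8*u/25 + 16/125)]
  have h45 : (0:ℝ) ≤ 4/5 := by norm_num
  have hp : ∀ k : ℕ, (0:ℝ) ≤ (1-u)*(u^k - (4/5)^k) := fun k =>
    mul_nonneg (by linarith) (sub_nonneg.2 (pow_le_pow_left₀ h45 h0 k))
  have hB : (23/5)*(1-u) ≤ 1 - u^12 := by
    nlinarith [hp 1, hp 2, hp 3, hp 4, hp 5, hp 6, hp 7, hp 8, hp 9, hp 10, hp 11]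
  have hmul : u^4*(1-u)*(1-u) ≤ (256/3125)*(1-u) :=
    mul_le_mul_of_nonneg_right hA (by linarith)
  nlinarith [hmul, hB, sub_pos.2 h1]

/-- The function `g(u,β)` whose roots `u ∈ (0,1)` determine the spectral singularities of the
PT-symmetric waveguide with gain-and-loss amplitude `γ = β²/2`. (Note that for `u = 0` the
formula evaluates to `1`, the limit value as `u → 0⁺`, since in Lean `β/0 = 0`.) -/
noncomputable def g (u β : ℝ) : ℝ :=
  u^4 * (1 - u^4) * Real.cosh (β * u) * Real.cos (β / u)
    - 2 * u^6 * Real.sinh (β * u) * Real.sin (β / u) + 1 - u^12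

set_option maxHeartbeats 1000000 in
theorem stmt_17 (β : ℝ) (hβ : 0 ≤ β) (u : ℝ) (hu0 : 0 ≤ u) (hu : u < (1 + β/4)⁻¹) :
    0 < g u β := by
  have h4 : 0 < 1 + β/4 := by linarith
  have hmul : u * (1 + β/4) < 1 := by
    have := mul_lt_mul_of_pos_right hu h4
    rwa [inv_mul_cancel₀ (ne_of_gt h4)] at this
  have hbu : β * u < 4 * (1 - u) := by nlinarith
  have hu1 : u < 1 := by nlinarith
  rcases eq_or_lt_of_le hu0 with h0 | h0
  · simp [g, ← h0]
  have ha0 : 0 ≤ β * u := by positivity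
  have hb0 : 0 ≤ β / u := by positivity
  rcases le_or_gt u (4/5) with hA | hBr
  · -- region A : `u ≤ 4/5`
    have hkey := keyCS u (β*u) (β/u)
    have hC : Real.cosh (β*u) ≤ Real.cosh (4*(1-u)) := by
      rw [Real.cosh_le_cosh, abs_of_nonneg ha0, abs_of_nonneg (by linarith)]
      linarith
    have hm : u^4*(1+u^4)*Real.cosh (β*u) ≤ u^4*(1+u^4)*Real.cosh (4*(1-u)) :=
      mul_le_mul_of_nonneg_left hC (by positivity)
    have hP : u^4*(1+u^4)*Real.cosh (4*(1-u)) < 1 - u^12 := by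
      rcases le_or_gt u (1/10) with h | hnext0
      · exact Acase (0) (1/10) (15521/10000) (5631/200) hu0 hu0 h (by norm_num) (by norm_num) (by norm_num) (by norm_num) (by norm_num)
      have hcur := hnext0
      rcases le_or_gt u (1/5) with h | hnext1
      · exact Acase (1/10) (1/5) (1799/1250) (2344/125) hu0 hcur.le h (by norm_num) (by norm_num) (by norm_num) (by norm_num) (by norm_num)
      have hcur := hnext1
      rcases le_or_gt u (3/10) with h | hnext2
      · exact Acase (1/5) (3/10) (6707/5000) (12507/1000) hu0 hcur.le h (by norm_num) (by norm_num) (by norm_num) (by norm_num) (by norm_num)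
      have hcur := hnext2
      rcases le_or_gt u (2/5) with h | hnext3
      · exact Acase (3/10) (2/5) (786/625) (8359/1000) hu0 hcur.le h (by norm_num) (by norm_num) (by norm_num) (by norm_num) (by norm_num)
      have hcur := hnext3
      rcases le_or_gt u (1/2) with h | hnext4
      · exact Acase (2/5) (1/2) (2967/2500) (5603/1000) hu0 hcur.le h (by norm_num) (by norm_num) (by norm_num) (by norm_num) (by norm_num)
      have hcur := hnext4
      rcases le_or_gt u (3/5) with h | hnext5
      · exact Acase (1/2) (3/5) (11283/10000) (3781/1000) hu0 hcur.le h (by norm_num) (by norm_num) (by norm_num) (by norm_num) (by norm_num)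
      have hcur := hnext5
      rcases le_or_gt u (13/20) with h | hnext6
      · exact Acase (3/5) (13/20) (5407/5000) (1293/500) hu0 hcur.le h (by norm_num) (by norm_num) (by norm_num) (by norm_num) (by norm_num)
      have hcur := hnext6
      rcases le_or_gt u (7/10) with h | hnext7
      · exact Acase (13/20) (7/10) (10621/10000) (539/250) hu0 hcur.le h (by norm_num) (by norm_num) (by norm_num) (by norm_num) (by norm_num)
      have hcur := hnext7
      rcases le_or_gt u (3/4) with h | hnext8
      · exact Acase (7/10) (3/4) (2091/2000) (907/500) hu0 hcur.le h (by norm_num) (by norm_num) (by norm_num) (by norm_num) (by norm_num)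
      have hcur := hnext8
      exact Acase (3/4) (4/5) (2063/2000) (309/200) hu0 hcur.le hA (by norm_num) (by norm_num) (by norm_num) (by norm_num) (by norm_num)
    unfold g
    linarith
  · -- region B : `u > 4/5`
    set a := β * u with haa
    set b := β / u with hbb
    have hba : b = a / u^2 := by rw [hbb, haa]; field_simp
    have ha1 : a < 4*(1-u) := hbu
    have ha08 : a ≤ 4/5 := by nlinarith
    have hb125 : b ≤ 5/4 := by
      rw [hba, div_le_iff₀ (by positivity)]
      nlinarith [sq_nonneg (u - 4/5)]
    have hcosb : 0 ≤ Real.cos b := by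
      nlinarith [Real.one_sub_sq_div_two_le_cos (x := b)]
    have h14 : u^4 ≤ 1 := pow_le_one₀ hu0 hu1.le
    have hterm1 : 0 ≤ u^4 * (1 - u^4) * Real.cosh a * Real.cos b := by
      have h1' : (0:ℝ) ≤ u^4 * (1-u^4) := by nlinarith [pow_nonneg hu0 4, h14]
      have hcp := (Real.cosh_pos a).le
      have := mul_nonneg (mul_nonneg h1' hcp) hcosb
      linarith [this]
    have hsin : Real.sin b ≤ b := Real.sin_le hb0
    have hsin0 : 0 ≤ Real.sin b := by
      have hbpi : b ≤ π := by linarith [Real.pi_gt_three]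
      exact Real.sin_nonneg_of_nonneg_of_le_pi hb0 hbpi
    have hsinh : Real.sinh a ≤ a + a^3/6 + 5*a^4/96 := sinh_le_quartic ha0 (by linarith)
    have hsinh0 : 0 ≤ Real.sinh a := by
      rw [haa]; exact (Real.sinh_nonneg_iff).2 ha0
    have hterm2 : 2 * u^6 * Real.sinh a * Real.sin b ≤ 2 * u^6 * ((a + a^3/6 + 5*a^4/96) * b) := by
      have h1' : Real.sinh a * Real.sin b ≤ (a + a^3/6 + 5*a^4/96) * b :=
        mul_le_mul hsinh hsin hsin0 (by positivity)
      nlinarith [mul_le_mul_of_nonneg_left h1' (by positivity : (0:ℝ) ≤ 2*u^6)]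
    have hub : u^6 * b = u^4 * a := by
      rw [hba]; field_simp
    have hquart : a + a^3/6 + 5*a^4/96 ≤ (17/15)*a := by
      nlinarith [mul_nonneg (mul_nonneg ha0 (by linarith : (0:ℝ) ≤ 4/5 - a))
        (by positivity : (0:ℝ) ≤ 5*a^2/96 + 5*a/24 + 1/6)]
    have hfin : 2 * u^6 * ((a + a^3/6 + 5*a^4/96) * b) < 1 - u^12 := by
      have e1 : 2 * u^6 * ((a + a^3/6 + 5*a^4/96) * b)
          = 2 * (a + a^3/6 + 5*a^4/96) * (u^6 * b) := by ring
      rw [e1, hub]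
      have hsq : a^2 ≤ 16*(1-u)^2 := by nlinarith
      have hbp := Bpoly hBr.le hu1
      have hq2 : 2 * (a + a^3/6 + 5*a^4/96) * (u^4*a) ≤ (34/15) * (u^4 * a^2) := by
        have := mul_le_mul_of_nonneg_right hquart (by positivity : (0:ℝ) ≤ 2*u^4*a)
        nlinarith [this]
      have hq3 : (34/15) * (u^4 * a^2) ≤ (544/15)*u^4*(1-u)^2 := by
        have := mul_le_mul_of_nonneg_left hsq (by positivity : (0:ℝ) ≤ (34/15)*u^4)
        nlinarith [this]
      linarith
    unfold g
    linarith
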